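/- Let Σ be a p×p symmetric positive definite matrix with unit diagonal whose off-diagonal entries are bounded in absolute value by γ, and let T ⊆ {1,…,p} with |T| = k and γ(k−1) < 1. Then for any j ∉ T, the vector Σ_{TT}^{-1} Σ_{Tj} has ℓ₁-norm at most γk/(1 − γ(k−1)). In particular, if γ ≤ ω₀/(2k) for some 0 ≤ ω₀ < 1, this ℓ₁-norm is at most ω₀. -/

import Mathlib

lemma posDef_submatrix_coe {p : ℕ} {M : Matrix (Fin p) (Fin p) ℝ} (hpd : M.PosDef)
    (T : Finset (Fin p)) :
    (M.submatrix (fun i : T => (i : Fin p)) (fun j : T => (j : Fin p))).PosDef := by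
  classical
  refine Matrix.posDef_iff_dotProduct_mulVec.mpr ⟨hpd.1.submatrix _, fun v hv => ?_⟩
  set w : Fin p → ℝ := fun x => if h : x ∈ T then v ⟨x, h⟩ else 0 with hw
  have hw0 : w ≠ 0 := by
    obtain ⟨i, hi⟩ := Function.ne_iff.mp hv
    intro h
    apply hi
    have := congrFun h (i : Fin p)
    simpa [hw, i.2] using this
  have hq := hpd.dotProduct_mulVec_pos hw0
  have key : dotProduct (star w) (M.mulVec w) = dotProduct (star v)
      ((M.submatrix (fun i : T => (i : Fin p)) (fun j : T => (j : Fin p))).mulVec v) := by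
    simp only [dotProduct, Matrix.mulVec, star_trivial, Matrix.submatrix_apply]
    rw [← Finset.sum_subset (Finset.subset_univ T) (by
      intro x _ hx
      simp [hw, hx])]
    rw [← Finset.sum_coe_sort T]
    refine Finset.sum_congr rfl fun i _ => ?_
    have hwi : w (i : Fin p) = v i := by simp [hw, i.2]
    rw [hwi]
    congr 1
    rw [← Finset.sum_subset (Finset.subset_univ T) (by
      intro y _ hy
      simp [hw, hy])]
    rw [← Finset.sum_coe_sort T]
    refine Finset.sum_congr rfl fun t _ => ?_
    have hwt : w (t : Fin p) = v t := by simp [hw, t.2]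
    rw [hwt]
  rw [key] at hq
  exact hq

/-- (Tropp) Irrepresentable-type bound from incoherence: if `M` is symmetric positive
definite with unit diagonal and off-diagonal entries bounded by `γ`, `T` has size `k`
with `γ (k-1) < 1`, and `j ∉ T`, then `‖M_{TT}⁻¹ M_{Tj}‖₁ ≤ γ k / (1 - γ (k-1))`;
in particular if moreover `γ ≤ ω₀ / (2 k)` with `0 ≤ ω₀ < 1` then this is at most `ω₀`. -/
theorem inv_submatrix_mulVec_l1_bound {p k : ℕ}
    (M : Matrix (Fin p) (Fin p) ℝ) (γ ω₀ : ℝ)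
    (hsym : M.IsSymm) (hpd : M.PosDef) (hdiag : ∀ j, M j j = 1)
    (hγ : ∀ i j, i ≠ j → |M i j| ≤ γ)
    (T : Finset (Fin p)) (hT : T.card = k) (hk : γ * ((k : ℝ) - 1) < 1)
    (j : Fin p) (hj : j ∉ T) :
    (∑ i : T, |((M.submatrix (fun i : T => (i : Fin p)) (fun j : T => (j : Fin p)))⁻¹.mulVec
        (fun i : T => M (i : Fin p) j)) i| ≤ γ * k / (1 - γ * ((k : ℝ) - 1))) ∧
      (γ ≤ ω₀ / (2 * k) → 0 ≤ ω₀ → ω₀ < 1 →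
        ∑ i : T, |((M.submatrix (fun i : T => (i : Fin p)) (fun j : T => (j : Fin p)))⁻¹.mulVec
          (fun i : T => M (i : Fin p) j)) i| ≤ ω₀) := by
  classical
  set A := M.submatrix (fun i : T => (i : Fin p)) (fun j : T => (j : Fin p)) with hA
  set b : T → ℝ := fun i : T => M (i : Fin p) j with hb
  set x := A⁻¹.mulVec b with hx
  set S := ∑ i : T, |x i| with hS
  by_cases hk0 : k = 0
  · -- T is empty
    have hTe : T = ∅ := Finset.card_eq_zero.mp (hT.trans hk0)
    have hS0 : S = 0 := by
      rw [hS]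
      exact Finset.sum_eq_zero fun i _ => absurd i.2 (by simp [hTe])
    constructor
    · rw [hS0, hk0]
      simp
    · intro _ hω0 _
      rw [hS0]; exact hω0
  · have hkpos : (0:ℝ) < k := by
      exact_mod_cast Nat.pos_of_ne_zero hk0
    have hk1 : (1:ℝ) ≤ k := by exact_mod_cast Nat.one_le_iff_ne_zero.mpr hk0
    obtain ⟨i₀, hi₀⟩ := Finset.card_pos.mp (hT ▸ Nat.pos_of_ne_zero hk0)
    have hγ0 : 0 ≤ γ := le_trans (abs_nonneg _) (hγ i₀ j (fun h => hj (h ▸ hi₀)))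
    have hcard : (Fintype.card T : ℝ) = k := by rw [Fintype.card_coe, hT]
    have hApd : A.PosDef := posDef_submatrix_coe hpd T
    have hdet : IsUnit A.det := isUnit_iff_ne_zero.mpr hApd.det_pos.ne'
    have hAx : A.mulVec x = b := by
      rw [hx, Matrix.mulVec_mulVec, Matrix.mul_nonsing_inv A hdet, Matrix.one_mulVec]
    have hd : 0 < 1 - γ * ((k:ℝ) - 1) := by linarith
    -- per-coordinate bound
    have hxi : ∀ i : T, |x i| ≤ γ + γ * (S - |x i|) := by
      intro i
      have hbi : ∑ t : T, A i t * x t = b i := congrFun hAx i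
      have hii : A i i = 1 := hdiag _
      have hrow : x i = b i - ∑ t ∈ Finset.univ.erase i, A i t * x t := by
        rw [← Finset.sum_erase_add _ _ (Finset.mem_univ i), hii, one_mul] at hbi
        linarith
      have herase : ∑ t ∈ Finset.univ.erase i, |x t| = S - |x i| := by
        have := Finset.sum_erase_add Finset.univ (fun t : T => |x t|) (Finset.mem_univ i)
        rw [hS]; linarith
      have hbγ : |b i| ≤ γ := hγ _ _ (fun h => hj (h ▸ i.2))
      calc |x i| = |b i - ∑ t ∈ Finset.univ.erase i, A i t * x t| := by rw [hrow]
        _ ≤ |b i| + |∑ t ∈ Finset.univ.erase i, A i t * x t| := abs_sub _ _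
        _ ≤ |b i| + ∑ t ∈ Finset.univ.erase i, |A i t * x t| :=
            add_le_add_right (Finset.abs_sum_le_sum_abs _ _) _
        _ ≤ γ + ∑ t ∈ Finset.univ.erase i, γ * |x t| := by
            refine add_le_add hbγ (Finset.sum_le_sum fun t ht => ?_)
            rw [abs_mul]
            have hti : (t : Fin p) ≠ (i : Fin p) :=
              fun h => (Finset.mem_erase.mp ht).1 (Subtype.coe_injective h)
            exact mul_le_mul_of_nonneg_right (hγ _ _ hti.symm) (abs_nonneg _)
        _ = γ + γ * (S - |x i|) := by rw [← Finset.mul_sum, herase]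
    have hcardu : ((Finset.univ : Finset T).card : ℝ) = k := by
      rw [Finset.card_univ, Fintype.card_coe, hT]
    have hSle : S ≤ γ * k + γ * ((k:ℝ) - 1) * S := by
      have h2 : S ≤ ∑ i : T, (γ + γ * (S - |x i|)) := by
        rw [hS]; exact Finset.sum_le_sum fun i _ => hxi i
      have h3 : ∑ i : T, (γ + γ * (S - |x i|)) =
          ((Finset.univ : Finset T).card : ℝ) * γ +
            γ * (((Finset.univ : Finset T).card : ℝ) * S - S) := by
        rw [Finset.sum_add_distrib, Finset.sum_const, nsmul_eq_mul, ← Finset.mul_sum,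
          Finset.sum_sub_distrib, Finset.sum_const, nsmul_eq_mul, ← hS]
      rw [h3, hcardu] at h2
      calc S ≤ (k : ℝ) * γ + γ * ((k : ℝ) * S - S) := h2
        _ = γ * k + γ * ((k:ℝ) - 1) * S := by ring
    have part1 : S ≤ γ * k / (1 - γ * ((k:ℝ) - 1)) := by
      rw [le_div_iff₀ hd]
      nlinarith
    refine ⟨part1, fun hγω hω0 hω1 => ?_⟩
    have h2k : γ * (2 * k) ≤ ω₀ := by
      rw [le_div_iff₀ (by positivity)] at hγω
      exact hγω
    have hγk : γ * k ≤ ω₀ / 2 := by linarith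
    refine le_trans part1 ?_
    rw [div_le_iff₀ hd]
    have hγk1 : γ * ((k:ℝ) - 1) ≤ γ * k := by nlinarith
    nlinarith [mul_le_mul_of_nonneg_left hγk1 hω0, mul_le_mul_of_nonneg_left hγk hω0]
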